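/- For positive integers s, D with s ≥ 3D−1, a positive integer n, and any j ∈ {1,…,D}, the approximation r_{n,j} admits the real multiple-integral representation r_{n,j} = ( (3Dn+j)! / (D · n!^{3D} · (j−1)!) ) · ∫_{[0,1]^{s+1}} f_j(t_0 t_1 ⋯ t_s) · ∏_{i=0}^{s} t_i^{n+j/D−1}(1−t_i)^n dt_0 ⋯ dt_s, where f_j(t) = Σ_{k=0}^{∞} ((3Dn+j+1)_{Dk} / (j)_{Dk}) t^k. -/

import Mathlib

open MeasureTheory

/-- The rational function `R_n(t)` from [FSZ18]:
`R_n(t) = D^(3Dn) * n!^(s+1-3D) * (∏_{l=0}^{3Dn} (t - n + l/D)) / (∏_{l=0}^{n} (t + l)^(s+1))`. -/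
noncomputable def Rfun (s D n : ℕ) (t : ℝ) : ℝ :=
  (D : ℝ) ^ (3 * D * n) * (n.factorial : ℝ) ^ (s + 1 - 3 * D) *
      (∏ l ∈ Finset.range (3 * D * n + 1), (t - n + l / D)) /
    ∏ l ∈ Finset.range (n + 1), (t + l) ^ (s + 1)

/-- The linear forms `r_{n,j} = ∑_{m=1}^∞ R_n(m + j/D)`. -/
noncomputable def rApprox (s D n j : ℕ) : ℝ :=
  ∑' m : ℕ, Rfun s D n ((m : ℝ) + 1 + j / D)

/-- The power series `f_j(t) = ∑_{k=0}^∞ ((3Dn+j+1)_{Dk} / (j)_{Dk}) t^k` (real version). -/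
noncomputable def fSeriesReal (n D j : ℕ) (t : ℝ) : ℝ :=
  ∑' k : ℕ,
    (ascPochhammer ℝ (D * k)).eval ((3 * D * n + j + 1 : ℕ) : ℝ) /
      (ascPochhammer ℝ (D * k)).eval (j : ℝ) * t ^ k


lemma beta_aux (x : ℝ) (hx : 0 < x) (n : ℕ) :
    ∫ t in Set.Icc (0:ℝ) 1, t ^ (x - 1) * (1 - t) ^ n
      = (n.factorial : ℝ) / ∏ l ∈ Finset.range (n + 1), (x + l) := by
  have hc := Complex.betaIntegral_eval_nat_add_one_right (u := (x:ℂ)) (by simpa using hx) n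
  rw [Complex.betaIntegral] at hc
  have heq : Set.EqOn (fun t : ℝ => (t:ℂ) ^ ((x:ℂ) - 1) * (1 - (t:ℂ)) ^ ((n:ℂ) + 1 - 1))
      (fun t : ℝ => ((t ^ (x - 1) * (1 - t) ^ n : ℝ) : ℂ)) (Set.uIcc 0 1) := by
    intro t ht
    rw [Set.uIcc_of_le (by norm_num : (0:ℝ) ≤ 1)] at ht
    show (t:ℂ) ^ ((x:ℂ) - 1) * (1 - (t:ℂ)) ^ ((n:ℂ) + 1 - 1)
      = ((t ^ (x - 1) * (1 - t) ^ n : ℝ) : ℂ)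
    rw [show ((n:ℂ) + 1 - 1) = ((n : ℕ) : ℂ) by ring, Complex.cpow_natCast,
      show ((x:ℂ) - 1) = ((x - 1 : ℝ) : ℂ) by push_cast; ring, ← Complex.ofReal_cpow ht.1]
    push_cast
    ring
  rw [intervalIntegral.integral_congr heq, intervalIntegral.integral_ofReal] at hc
  have key : (∫ t in (0:ℝ)..1, t ^ (x - 1) * (1 - t) ^ n)
      = (n.factorial : ℝ) / ∏ l ∈ Finset.range (n + 1), (x + l) := by
    apply Complex.ofReal_injective
    rw [hc]
    push_cast
    ring
  rw [MeasureTheory.integral_Icc_eq_integral_Ioc,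
    ← intervalIntegral.integral_of_le (by norm_num : (0:ℝ) ≤ 1), key]

noncomputable def hfun (X : ℝ) (n k : ℕ) (t : ℝ) : ℝ := t ^ (X - 1) * (1 - t) ^ n * t ^ k

lemma hfun_cont (X : ℝ) (hX : 1 < X) (n k : ℕ) : Continuous (hfun X n k) := by
  apply Continuous.mul
  apply Continuous.mul
  · exact continuous_iff_continuousAt.2 fun t =>
      Real.continuousAt_rpow_const t (X - 1) (Or.inr (by linarith))
  · fun_prop
  · fun_prop

lemma hfun_nonneg (X : ℝ) (n k : ℕ) {t : ℝ} (ht : t ∈ Set.Icc (0:ℝ) 1) : 0 ≤ hfun X n k t := by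
  have h1 : (0:ℝ) ≤ 1 - t := by linarith [ht.2]
  exact mul_nonneg (mul_nonneg (Real.rpow_nonneg ht.1 _) (pow_nonneg h1 n)) (pow_nonneg ht.1 k)

lemma beta_k (X : ℝ) (hX : 1 < X) (n k : ℕ) :
    ∫ t in Set.Icc (0:ℝ) 1, hfun X n k t
      = (n.factorial : ℝ) / ∏ l ∈ Finset.range (n + 1), (X + k + l) := by
  have hk0 : (0:ℝ) ≤ k := Nat.cast_nonneg k
  have hcong : Set.EqOn (hfun X n k) (fun t => t ^ (X + k - 1) * (1 - t) ^ n)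
      (Set.Icc (0:ℝ) 1) := by
    intro t ht
    show t ^ (X - 1) * (1 - t) ^ n * t ^ k = t ^ (X + (k:ℝ) - 1) * (1 - t) ^ n
    rw [show X + (k:ℝ) - 1 = (X - 1) + (k:ℝ) by ring,
      Real.rpow_add' ht.1 (ne_of_gt (by linarith)), Real.rpow_natCast]
    ring
  rw [MeasureTheory.setIntegral_congr_fun measurableSet_Icc hcong,
    beta_aux (X + k) (by linarith) n]

lemma mem_box_iff {s : ℕ} (t : Fin (s+1) → ℝ) :
    t ∈ Set.Icc (0 : Fin (s+1) → ℝ) 1 ↔ ∀ i, t i ∈ Set.Icc (0:ℝ) 1 := by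
  simp [Set.mem_Icc, Pi.le_def, forall_and]

lemma prod_indicator' {s : ℕ} (F : ℝ → ℝ) (t : Fin (s+1) → ℝ) :
    (Set.Icc (0 : Fin (s+1) → ℝ) 1).indicator (fun t => ∏ i, F (t i)) t
      = ∏ i, (Set.Icc (0:ℝ) 1).indicator F (t i) := by
  by_cases ht : t ∈ Set.Icc (0 : Fin (s+1) → ℝ) 1
  · rw [Set.indicator_of_mem ht]
    exact Finset.prod_congr rfl fun i _ =>
      (Set.indicator_of_mem ((mem_box_iff t).1 ht i) F).symm
  · rw [Set.indicator_of_notMem ht]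
    obtain ⟨i, hi⟩ := not_forall.1 (fun h => ht ((mem_box_iff t).2 h))
    exact (Finset.prod_eq_zero (Finset.mem_univ i) (Set.indicator_of_notMem hi F)).symm

lemma box_integral {s : ℕ} (F : ℝ → ℝ) :
    ∫ t in Set.Icc (0 : Fin (s+1) → ℝ) 1, ∏ i, F (t i)
      = (∫ t in Set.Icc (0:ℝ) 1, F t) ^ (s+1) := by
  rw [← integral_indicator measurableSet_Icc]
  rw [show ((Set.Icc (0 : Fin (s+1) → ℝ) 1).indicator fun t => ∏ i, F (t i)) = fun t => ∏ i, (Set.Icc (0:ℝ) 1).indicator F (t i) from funext (prod_indicator' F)]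
  rw [MeasureTheory.integral_fintype_prod_volume_eq_pow (𝕜 := ℝ) (ι := Fin (s+1))
    ((Set.Icc (0:ℝ) 1).indicator F), integral_indicator measurableSet_Icc, Fintype.card_fin]

lemma asc_prod_range (c : ℕ) (m : ℕ) :
    ∏ l ∈ Finset.range m, ((c : ℝ) + l) = (c.ascFactorial m : ℝ) := by
  induction m with
  | zero => simp
  | succ m ih => rw [Finset.prod_range_succ, ih, Nat.ascFactorial_succ]; push_cast; ring

lemma key_nat (A j k : ℕ) (hj : 1 ≤ j) (m : ℕ) :
    (A + j).factorial * (A + j + 1).ascFactorial m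
      = (m + j).ascFactorial (A + 1) * ((j - 1).factorial * j.ascFactorial m) := by
  have h1 : (A + j).factorial * (A + j + 1).ascFactorial m = (A + j + m).factorial :=
    Nat.factorial_mul_ascFactorial _ _
  have h2 : (j - 1).factorial * j.ascFactorial m = (j - 1 + m).factorial := by
    have := Nat.factorial_mul_ascFactorial (j - 1) m
    rwa [show j - 1 + 1 = j by omega] at this
  have h3 : (j - 1 + m).factorial * (m + j).ascFactorial (A + 1)
      = (j - 1 + m + (A + 1)).factorial := by
    have := Nat.factorial_mul_ascFactorial (j - 1 + m) (A + 1)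
    rwa [show j - 1 + m + 1 = m + j by omega] at this
  rw [h1, h2, mul_comm, h3, show j - 1 + m + (A + 1) = A + j + m by omega]

noncomputable def cterm (D n j k : ℕ) : ℝ :=
  (ascPochhammer ℝ (D * k)).eval ((3 * D * n + j + 1 : ℕ) : ℝ) /
    (ascPochhammer ℝ (D * k)).eval (j : ℝ)

lemma cterm_eq (D n j k : ℕ) (hj : 1 ≤ j) :
    cterm D n j k = ((D * k + j).ascFactorial (3 * D * n + 1) : ℝ) *
      ((j - 1).factorial : ℝ) / ((3 * D * n + j).factorial : ℝ) := by
  have hA3 : 0 < j.ascFactorial (D * k) := by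
    have := Nat.ascFactorial_pos (j - 1) (D * k)
    rwa [show j - 1 + 1 = j by omega] at this
  have hA3' : ((j.ascFactorial (D * k) : ℝ)) ≠ 0 := by positivity
  have hF : ((3 * D * n + j).factorial : ℝ) ≠ 0 := by positivity
  rw [cterm, ← Nat.cast_ascFactorial, ← Nat.cast_ascFactorial, div_eq_div_iff hA3' hF]
  have := congrArg (Nat.cast : ℕ → ℝ) (key_nat (3 * D * n) j k hj (D * k))
  push_cast at this ⊢
  linarith

lemma Rfun_term (s D n j k : ℕ) (hD : 1 ≤ D) (hj : 1 ≤ j) (hsD : 3 * D ≤ s + 1) :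
    Rfun s D n ((n : ℝ) + k + j / D)
      = ((3 * D * n + j).factorial : ℝ) /
          ((D : ℝ) * (n.factorial : ℝ) ^ (3 * D) * ((j - 1).factorial : ℝ)) *
        (cterm D n j k *
          ((n.factorial : ℝ) / ∏ l ∈ Finset.range (n + 1), ((n : ℝ) + j / D + k + l)) ^ (s + 1)) := by
  have hD0 : (0:ℝ) < D := by exact_mod_cast hD
  have hj0 : (0:ℝ) < j := by exact_mod_cast hj
  have hnum : ∏ l ∈ Finset.range (3 * D * n + 1), ((n : ℝ) + k + j / D - n + l / D)
      = ((D * k + j).ascFactorial (3 * D * n + 1) : ℝ) / (D : ℝ) ^ (3 * D * n + 1) := by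
    have hc : ∀ l ∈ Finset.range (3 * D * n + 1),
        (n : ℝ) + k + j / D - n + l / D = (((D * k + j : ℕ) : ℝ) + l) / D := by
      intro l _; push_cast; field_simp; ring
    rw [Finset.prod_congr rfl hc, Finset.prod_div_distrib, asc_prod_range,
      Finset.prod_const, Finset.card_range]
  have hden : ∏ l ∈ Finset.range (n + 1), ((n : ℝ) + k + j / D + l) ^ (s + 1)
      = (∏ l ∈ Finset.range (n + 1), ((n : ℝ) + j / D + k + l)) ^ (s + 1) := by
    rw [← Finset.prod_pow]
    exact Finset.prod_congr rfl fun l _ => by ring_nf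
  rw [Rfun, hnum, hden, cterm_eq _ _ _ _ hj]
  have hPpos : 0 < ∏ l ∈ Finset.range (n + 1), ((n : ℝ) + j / D + k + l) :=
    Finset.prod_pos fun l _ => by positivity
  obtain ⟨e, he⟩ : ∃ e, s + 1 = 3 * D + e := ⟨s + 1 - 3 * D, by omega⟩
  rw [show s + 1 - 3 * D = e by omega]
  set P := ∏ l ∈ Finset.range (n + 1), ((n : ℝ) + j / D + k + l) with hP
  have hfac : (0:ℝ) < (n.factorial : ℝ) := by positivity
  have hjf : (0:ℝ) < ((j-1).factorial : ℝ) := by positivity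
  have hDpow : (D:ℝ) ^ (3 * D * n + 1) = (D:ℝ) ^ (3 * D * n) * D := pow_succ _ _
  rw [he, hDpow, pow_add]
  field_simp
  have hPe : P ^ e * P⁻¹ ^ e = 1 := by rw [← mul_pow, mul_inv_cancel₀ hPpos.ne', one_pow]
  have hPd : P ^ (D * 3) * P⁻¹ ^ (D * 3) = 1 := by rw [← mul_pow, mul_inv_cancel₀ hPpos.ne', one_pow]
  linear_combination (-((n.factorial:ℝ) ^ e * (n.factorial:ℝ) ^ (D * 3) * ((D * k + j).ascFactorial (3 * D * n + 1) : ℝ))) * hPe + (-((n.factorial:ℝ) ^ e * (n.factorial:ℝ) ^ (D * 3) * ((D * k + j).ascFactorial (3 * D * n + 1) : ℝ)) * P ^ e * P⁻¹ ^ e) * hPd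

lemma Rfun_vanish (s D n j m : ℕ) (hD : 1 ≤ D) (hj1 : 1 ≤ j) (hjD : j ≤ D)
    (hm : m + 1 < n) : Rfun s D n ((m : ℝ) + 1 + j / D) = 0 := by
  have hD0 : (0:ℝ) < D := by exact_mod_cast hD
  set q : ℕ := n - m - 1 with hq
  have hq1 : 1 ≤ q := by omega
  have hjq : j ≤ D * q := le_trans hjD (by nlinarith)
  have hmem : D * q - j ∈ Finset.range (3 * D * n + 1) := by
    have h1 : D * q ≤ D * n := Nat.mul_le_mul_left D (by omega)
    have h2 : D * n ≤ 3 * D * n := by nlinarith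
    simp only [Finset.mem_range]
    omega
  have hzero : (m : ℝ) + 1 + j / D - n + (D * q - j : ℕ) / D = 0 := by
    have hqcast : (q : ℝ) = (n:ℝ) - m - 1 := by
      rw [hq, show n - m - 1 = n - (m+1) by omega, Nat.cast_sub (by omega : m + 1 ≤ n)]
      push_cast; ring
    have hcast : ((D * q - j : ℕ) : ℝ) = D * ((n:ℝ) - m - 1) - j := by
      rw [Nat.cast_sub hjq]; push_cast [hqcast]; ring
    rw [hcast]
    field_simp
    ring
  rw [Rfun, Finset.prod_eq_zero hmem hzero, mul_zero, zero_div]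

lemma cterm_nonneg (D n j k : ℕ) (hj : 1 ≤ j) : 0 ≤ cterm D n j k := by
  rw [cterm_eq _ _ _ _ hj]; positivity

lemma cterm_bound (D n j k : ℕ) (hD : 1 ≤ D) (hj : 1 ≤ j) :
    cterm D n j k ≤ (((D + j + 3*D*n)^(3*D*n+1) : ℕ) : ℝ) * ((k:ℝ)+1)^(3*D*n+1) := by
  have h1 : cterm D n j k ≤ ((D * k + j).ascFactorial (3 * D * n + 1) : ℝ) := by
    rw [cterm_eq _ _ _ _ hj, div_le_iff₀ (by positivity)]
    have : ((j-1).factorial : ℝ) ≤ ((3*D*n+j).factorial : ℝ) := by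
      exact_mod_cast Nat.factorial_le (by omega)
    nlinarith [Nat.cast_nonneg (α := ℝ) ((D * k + j).ascFactorial (3 * D * n + 1))]
  have h2 : (D * k + j).ascFactorial (3 * D * n + 1)
      ≤ ((D + j + 3*D*n) * (k+1))^(3*D*n+1) := by
    have h := Nat.ascFactorial_le_pow_add (D*k+j-1) (3*D*n+1)
    rw [show D*k+j-1+1 = D*k+j by omega] at h
    refine le_trans h (Nat.pow_le_pow_left ?_ _)
    have e : D*k+j-1+(3*D*n+1) = D*k+j+3*D*n := by omega
    have h2 := Nat.mul_le_mul_right k (show D ≤ D+j+3*D*n by omega)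
    have h3 : (D+j+3*D*n)*(k+1) = (D+j+3*D*n)*k + (D+j+3*D*n) := by ring
    omega
  calc cterm D n j k ≤ ((D * k + j).ascFactorial (3 * D * n + 1) : ℝ) := h1
    _ ≤ (((D + j + 3*D*n) * (k+1))^(3*D*n+1) : ℕ) := by exact_mod_cast h2
    _ = (((D + j + 3*D*n)^(3*D*n+1) : ℕ) : ℝ) * ((k:ℝ)+1)^(3*D*n+1) := by
      push_cast; rw [mul_pow]

lemma term_bound (s D n j k : ℕ) (hD : 1 ≤ D) (hn : 1 ≤ n) (hj : 1 ≤ j) (hsD : 3*D ≤ s+1) :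
    cterm D n j k *
        ((n.factorial:ℝ) / ∏ l ∈ Finset.range (n+1), ((n:ℝ) + j/D + k + l)) ^ (s+1)
      ≤ (((D + j + 3*D*n)^(3*D*n+1) : ℕ) : ℝ) * (n.factorial:ℝ)^(s+1) / ((k:ℝ)+1)^2 := by
  have hD0 : (0:ℝ) < D := by exact_mod_cast hD
  have hj0 : (0:ℝ) < j := by exact_mod_cast hj
  have hu : (1:ℝ) ≤ (k:ℝ)+1 := by linarith [Nat.cast_nonneg (α := ℝ) k]
  have hu0 : (0:ℝ) < (k:ℝ)+1 := by linarith
  set u : ℝ := (k:ℝ)+1 with hudef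
  set M := 3*D*n+1 with hM
  set B := (((D + j + 3*D*n)^(3*D*n+1) : ℕ) : ℝ) with hB
  set F := (n.factorial:ℝ)^(s+1) with hF
  have hB0 : (0:ℝ) ≤ B := by positivity
  have hF0 : (0:ℝ) ≤ F := by positivity
  have hP : u^(n+1) ≤ ∏ l ∈ Finset.range (n+1), ((n:ℝ) + j/D + k + l) := by
    calc u^(n+1) = ∏ _l ∈ Finset.range (n+1), u := by
          rw [Finset.prod_const, Finset.card_range]
      _ ≤ _ := by
          refine Finset.prod_le_prod (fun l _ => le_of_lt hu0) (fun l _ => ?_)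
          have hn1 : (1:ℝ) ≤ (n:ℝ) := by exact_mod_cast hn
          have hl : (0:ℝ) ≤ (l:ℝ) := Nat.cast_nonneg l
          have hjD : (0:ℝ) ≤ (j:ℝ)/D := by positivity
          rw [hudef]; linarith
  have hPpos : 0 < ∏ l ∈ Finset.range (n+1), ((n:ℝ) + j/D + k + l) :=
    lt_of_lt_of_le (by positivity) hP
  have hβ : ((n.factorial:ℝ) / ∏ l ∈ Finset.range (n+1), ((n:ℝ) + j/D + k + l)) ^ (s+1)
      ≤ F / u^((n+1)*(s+1)) := by
    rw [hF, pow_mul, ← div_pow]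
    gcongr
  have hMle : M + 2 ≤ (n+1)*(s+1) := by
    have h1 : (n+1)*(3*D) ≤ (n+1)*(s+1) := Nat.mul_le_mul_left (n+1) hsD
    have h2 : (n+1)*(3*D) = 3*D*n + 3*D := by ring
    omega
  obtain ⟨r, hr⟩ : ∃ r, (n+1)*(s+1) = M + 2 + r := ⟨(n+1)*(s+1) - (M+2), by omega⟩
  have hur : (1:ℝ) ≤ u ^ r := one_le_pow₀ hu
  calc cterm D n j k *
        ((n.factorial:ℝ) / ∏ l ∈ Finset.range (n+1), ((n:ℝ) + j/D + k + l)) ^ (s+1)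
      ≤ (B * u^M) * (F / u^((n+1)*(s+1))) := by
        refine mul_le_mul (cterm_bound D n j k hD hj) hβ (by positivity) (by positivity)
    _ = B * F / (u^2 * u^r) := by
        rw [hr, pow_add, pow_add]
        field_simp
        ring
    _ ≤ B * F / u^2 := by
        refine div_le_div_of_nonneg_left (by positivity) (by positivity) ?_
        exact le_mul_of_one_le_right (by positivity) hur

lemma summable_bound (K : ℝ) : Summable (fun k : ℕ => K / ((k:ℝ)+1)^2) := by
  have h : Summable (fun k : ℕ => 1/((k:ℝ))^2) := Real.summable_one_div_nat_pow.2 one_lt_two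
  have h2 := (summable_nat_add_iff 1).2 h
  have h3 : (fun k : ℕ => K / ((k:ℝ)+1)^2) = fun k => K * (1/(((k+1:ℕ)):ℝ)^2) := by
    funext k; push_cast; ring
  rw [h3]; exact h2.mul_left K

lemma rhs_eval (s D n j : ℕ) (hD : 1 ≤ D) (hn : 1 ≤ n) (hj : 1 ≤ j) (hsD : 3*D ≤ s+1) :
    ∫ t in Set.Icc (0 : Fin (s+1) → ℝ) 1,
        fSeriesReal n D j (∏ i, t i) * ∏ i, t i ^ ((n:ℝ) + j/D - 1) * (1 - t i) ^ n
      = ∑' k : ℕ, cterm D n j k *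
          ((n.factorial : ℝ) / ∏ l ∈ Finset.range (n+1), ((n:ℝ) + j/D + k + l)) ^ (s+1) := by
  have hD0 : (0:ℝ) < D := by exact_mod_cast hD
  have hj0 : (0:ℝ) < j := by exact_mod_cast hj
  have hn1 : (1:ℝ) ≤ (n:ℝ) := by exact_mod_cast hn
  set X : ℝ := (n:ℝ) + (j:ℝ)/(D:ℝ) with hXdef
  have hX : 1 < X := by
    have hpos : 0 < (j:ℝ)/(D:ℝ) := by positivity
    rw [hXdef]; linarith
  set Ht : ℕ → ℝ → ℝ := fun k => (Set.Icc (0:ℝ) 1).indicator (hfun X n k) with hHt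
  set gk : ℕ → (Fin (s+1) → ℝ) → ℝ := fun k t => cterm D n j k * ∏ i, Ht k (t i) with hgk
  have hHtm : ∀ k, Measurable (Ht k) := fun k =>
    ((hfun_cont X hX n k).measurable).indicator measurableSet_Icc
  have hHti : ∀ k, Integrable (Ht k) := fun k =>
    (integrable_indicator_iff measurableSet_Icc).2
      (((hfun_cont X hX n k).continuousOn).integrableOn_compact isCompact_Icc)
  have hHtval : ∀ k, ∫ t, Ht k t
      = (n.factorial:ℝ) / ∏ l ∈ Finset.range (n+1), (X + k + l) := fun k => by
    rw [hHt, integral_indicator measurableSet_Icc]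
    exact beta_k X hX n k
  have hHtnn : ∀ k t, 0 ≤ Ht k t := fun k t =>
    Set.indicator_nonneg (fun x hx => hfun_nonneg X n k hx) t
  have hgm : ∀ k, Measurable (gk k) := fun k =>
    (Finset.measurable_prod Finset.univ
      (fun i _ => (hHtm k).comp (measurable_pi_apply i))).const_mul _
  have hgi : ∀ k, Integrable (gk k) := fun k =>
    (Integrable.fintype_prod (𝕜 := ℝ) (f := fun _ : Fin (s+1) => Ht k)
      (fun _ => hHti k)).const_mul _
  have hgnn : ∀ k t, 0 ≤ gk k t := fun k t =>
    mul_nonneg (cterm_nonneg D n j k hj) (Finset.prod_nonneg fun i _ => hHtnn k (t i))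
  have hgval : ∀ k, (∫ t, gk k t)
      = cterm D n j k *
          ((n.factorial : ℝ) / ∏ l ∈ Finset.range (n+1), ((n:ℝ) + j/D + k + l)) ^ (s+1) := by
    intro k
    rw [hgk]
    simp only []
    rw [MeasureTheory.integral_const_mul,
      MeasureTheory.integral_fintype_prod_volume_eq_pow (ι := Fin (s+1)) (Ht k),
      hHtval k, Fintype.card_fin]
  have hfin : (∑' k : ℕ, ∫⁻ a, ‖gk k a‖₊) ≠ ⊤ := by
    have hlin : ∀ k, (∫⁻ a, ‖gk k a‖₊)
        = ENNReal.ofReal (cterm D n j k *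
            ((n.factorial : ℝ) / ∏ l ∈ Finset.range (n+1), ((n:ℝ) + j/D + k + l)) ^ (s+1)) := by
      intro k
      calc (∫⁻ a, ‖gk k a‖₊) = ∫⁻ a, ENNReal.ofReal (gk k a) :=
            lintegral_congr fun a => Real.enorm_eq_ofReal (hgnn k a)
        _ = ENNReal.ofReal (∫ a, gk k a) :=
            (ofReal_integral_eq_lintegral_ofReal (hgi k) (ae_of_all _ (hgnn k))).symm
        _ = _ := by rw [hgval k]
    have hK : ∀ k : ℕ, cterm D n j k *
        ((n.factorial : ℝ) / ∏ l ∈ Finset.range (n+1), ((n:ℝ) + j/D + k + l)) ^ (s+1)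
        ≤ (((D + j + 3*D*n)^(3*D*n+1) : ℕ) : ℝ) * (n.factorial:ℝ)^(s+1) / ((k:ℝ)+1)^2 :=
      fun k => term_bound s D n j k hD hn hj hsD
    refine LT.lt.ne ?_
    calc (∑' k : ℕ, ∫⁻ a, ‖gk k a‖₊)
        ≤ ∑' k : ℕ, ENNReal.ofReal
            ((((D + j + 3*D*n)^(3*D*n+1) : ℕ) : ℝ) * (n.factorial:ℝ)^(s+1) / ((k:ℝ)+1)^2) := by
          refine ENNReal.tsum_le_tsum fun k => ?_
          rw [hlin k]
          exact ENNReal.ofReal_le_ofReal (hK k)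
      _ = ENNReal.ofReal (∑' k : ℕ,
            (((D + j + 3*D*n)^(3*D*n+1) : ℕ) : ℝ) * (n.factorial:ℝ)^(s+1) / ((k:ℝ)+1)^2) :=
          (ENNReal.ofReal_tsum_of_nonneg (fun k => by positivity) (summable_bound _)).symm
      _ < ⊤ := ENNReal.ofReal_lt_top
  rw [← integral_indicator measurableSet_Icc]
  have hpt : (Set.Icc (0 : Fin (s+1) → ℝ) 1).indicator
      (fun t => fSeriesReal n D j (∏ i, t i) *
        ∏ i, t i ^ ((n:ℝ) + j/D - 1) * (1 - t i) ^ n)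
      = fun t => ∑' k, gk k t := by
    funext t
    by_cases ht : t ∈ Set.Icc (0 : Fin (s+1) → ℝ) 1
    · rw [Set.indicator_of_mem ht]
      have h1 := (mem_box_iff t).1 ht
      rw [fSeriesReal, ← tsum_mul_right]
      refine tsum_congr fun k => ?_
      rw [hgk]
      simp only []
      rw [Finset.prod_congr rfl
        (fun i _ => (Set.indicator_of_mem (h1 i) (hfun X n k) : Ht k (t i) = _))]
      simp only [hfun, cterm]
      simp only [Finset.prod_mul_distrib, Finset.prod_pow]
      ring
    · rw [Set.indicator_of_notMem ht]
      have hz : ∀ k, gk k t = 0 := by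
        intro k
        obtain ⟨i, hi⟩ := not_forall.1 (fun h => ht ((mem_box_iff t).2 h))
        rw [hgk]
        simp only []
        rw [Finset.prod_eq_zero (Finset.mem_univ i) (Set.indicator_of_notMem hi _), mul_zero]
      simp only [hz, tsum_zero]
  rw [hpt, integral_tsum (fun k => (hgm k).aestronglyMeasurable) hfin]
  exact tsum_congr hgval


/-- The hypergeometric multiple-integral representation
`r_{n,j} = ((3Dn+j)! / (D n!^(3D) (j-1)!)) ∫_{[0,1]^(s+1)} f_j(t_0 ⋯ t_s)
∏_{i=0}^{s} t_i^(n+j/D-1) (1-t_i)^n dt_0 ⋯ dt_s`. -/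
theorem rApprox_eq_fSeries_integral (s D : ℕ) (hs : 0 < s) (hD : 0 < D) (hsD : 3 * D - 1 ≤ s)
    (n : ℕ) (hn : 0 < n) (j : ℕ) (hj : j ∈ Finset.Icc 1 D) :
    rApprox s D n j =
      ((3 * D * n + j).factorial : ℝ) /
          (D * (n.factorial : ℝ) ^ (3 * D) * ((j - 1).factorial : ℝ)) *
        ∫ t in Set.Icc (0 : Fin (s + 1) → ℝ) 1,
          fSeriesReal n D j (∏ i, t i) *
            ∏ i, t i ^ ((n : ℝ) + j / D - 1) * (1 - t i) ^ n := by
  rw [Finset.mem_Icc] at hj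
  obtain ⟨hj1, hjD⟩ := hj
  have hsD' : 3 * D ≤ s + 1 := by omega
  have hre : rApprox s D n j = ∑' k : ℕ, Rfun s D n ((n : ℝ) + k + j / D) := by
    rw [rApprox, ← Function.Injective.tsum_eq
      (f := fun m : ℕ => Rfun s D n ((m : ℝ) + 1 + (j : ℝ) / D))
      (g := fun q : ℕ => q + (n - 1)) (add_left_injective (n - 1)) ?_]
    · refine tsum_congr fun k => ?_
      congr 1
      push_cast [Nat.cast_sub (show 1 ≤ n from hn)]
      ring
    · intro m hm
      rcases le_or_gt (n - 1) m with h | h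
      · exact ⟨m - (n - 1), by show m - (n - 1) + (n - 1) = m; omega⟩
      · exact absurd (Rfun_vanish s D n j m hD hj1 hjD (by omega)) hm
  rw [hre, rhs_eval s D n j hD hn hj1 hsD', ← tsum_mul_left]
  exact tsum_congr fun k => Rfun_term s D n j k hD hj1 hsD'
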